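/- Let f : ℝⁿ → ℝ be convex and differentiable, ψ : ℝⁿ → ℝ ∪ {+∞} convex, proper, and closed, F = f + ψ, and let x* be a minimizer of F with F* = F(x*). Let H be a symmetric positive semidefinite matrix, γ ∈ (0,1), η ∈ [0,1), α ∈ (0,1], and suppose: (a) d satisfies Q(d) ≤ (1 − η)Q*; (b) the Armijo condition F(x + αd) ≤ F(x) + αγΔ holds, where Δ = ∇f(x)ᵀd + ψ(x+d) − ψ(x); and (c) F(x) − F* ≥ (x − x*)ᵀH(x − x*). Then F(x + αd) − F* ≤ (1 − (1 − η)γα/2)·(F(x) − F*). -/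

import Mathlib

/-
Setting: minimize F = f + ψ over ℝⁿ (modeled as `EuclideanSpace ℝ (Fin n)`), where
f : ℝⁿ → ℝ is smooth and ψ : ℝⁿ → ℝ ∪ {+∞} (modeled as `EReal`-valued, never ⊥)
is convex, proper and closed.  The quadratic model at x with symmetric operator H is
Q(d) = ⟪∇f(x), d⟫ + (1/2)⟪H d, d⟫ + ψ(x+d) − ψ(x), and Δ(d) = ⟪∇f(x), d⟫ + ψ(x+d) − ψ(x).
-/

open scoped RealInnerProductSpace
open Set Filter Topology

noncomputable section

/-- Convexity for extended-real-valued functions (values in ℝ ∪ {±∞}). -/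
def ConvexE {n : ℕ} (g : EuclideanSpace ℝ (Fin n) → EReal) : Prop :=
  ∀ x y : EuclideanSpace ℝ (Fin n), ∀ a b : ℝ, 0 ≤ a → 0 ≤ b → a + b = 1 →
    g (a • x + b • y) ≤ (a : EReal) * g x + (b : EReal) * g y

/-- ψ is proper: it never takes the value −∞ (its values lie in ℝ ∪ {+∞})
and it is finite somewhere. -/
def ProperPsi {n : ℕ} (ψ : EuclideanSpace ℝ (Fin n) → EReal) : Prop :=
  (∀ x, ψ x ≠ ⊥) ∧ ∃ x, ψ x ≠ ⊤

/-- ψ is closed, i.e. lower semicontinuous. -/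
def ClosedPsi {n : ℕ} (ψ : EuclideanSpace ℝ (Fin n) → EReal) : Prop :=
  LowerSemicontinuous ψ

/-- H is a symmetric (self-adjoint) linear operator. -/
def SymmCLM {n : ℕ} (H : EuclideanSpace ℝ (Fin n) →L[ℝ] EuclideanSpace ℝ (Fin n)) : Prop :=
  ∀ u v, ⟪H u, v⟫ = ⟪u, H v⟫

/-- m is the smallest eigenvalue of the symmetric operator H
(characterized as the minimum of the Rayleigh quotient over the unit sphere). -/
def IsSmallestEigenvalue {n : ℕ} (H : EuclideanSpace ℝ (Fin n) →L[ℝ] EuclideanSpace ℝ (Fin n))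
    (m : ℝ) : Prop :=
  IsLeast {r : ℝ | ∃ u : EuclideanSpace ℝ (Fin n), ‖u‖ = 1 ∧ r = ⟪H u, u⟫} m

/-- The objective F = f + ψ (extended-real-valued). -/
def Fm {n : ℕ} (f : EuclideanSpace ℝ (Fin n) → ℝ) (ψ : EuclideanSpace ℝ (Fin n) → EReal)
    (x : EuclideanSpace ℝ (Fin n)) : EReal :=
  (f x : EReal) + ψ x

/-- The quadratic model Q(d) = ∇f(x)ᵀd + (1/2)dᵀHd + ψ(x+d) − ψ(x). -/
def Qm {n : ℕ} (f : EuclideanSpace ℝ (Fin n) → ℝ) (ψ : EuclideanSpace ℝ (Fin n) → EReal)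
    (H : EuclideanSpace ℝ (Fin n) →L[ℝ] EuclideanSpace ℝ (Fin n))
    (x d : EuclideanSpace ℝ (Fin n)) : EReal :=
  ((⟪gradient f x, d⟫ + 1 / 2 * ⟪H d, d⟫ : ℝ) : EReal) + ψ (x + d) - ψ x

/-- Δ(d) = ∇f(x)ᵀd + ψ(x+d) − ψ(x). -/
def Dm {n : ℕ} (f : EuclideanSpace ℝ (Fin n) → ℝ) (ψ : EuclideanSpace ℝ (Fin n) → EReal)
    (x d : EuclideanSpace ℝ (Fin n)) : EReal :=
  ((⟪gradient f x, d⟫ : ℝ) : EReal) + ψ (x + d) - ψ x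

/-- g is σ-strongly convex: g − (σ/2)‖·‖² is convex. -/
def StrongConvexE {n : ℕ} (σ : ℝ) (g : EuclideanSpace ℝ (Fin n) → EReal) : Prop :=
  ConvexE (fun d => g d - ((σ / 2 * ‖d‖ ^ 2 : ℝ) : EReal))

/-- The solution set Ω = argmin F. -/
def SolSet {n : ℕ} (f : EuclideanSpace ℝ (Fin n) → ℝ)
    (ψ : EuclideanSpace ℝ (Fin n) → EReal) : Set (EuclideanSpace ℝ (Fin n)) :=
  {y | ∀ z, Fm f ψ y ≤ Fm f ψ z}

/-- Gradient inequality for convex differentiable functions. -/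
lemma grad_convex_ineq {n : ℕ} (f : EuclideanSpace ℝ (Fin n) → ℝ)
    (hf : Differentiable ℝ f) (hc : ConvexOn ℝ Set.univ f)
    (x y : EuclideanSpace ℝ (Fin n)) :
    ⟪gradient f x, y - x⟫ ≤ f y - f x := by
  set g : ℝ → ℝ := fun t => f (x + t • (y - x)) with hgdef
  have hcurve : HasDerivAt (fun t : ℝ => x + t • (y - x)) (y - x) 0 := by
    simpa using ((hasDerivAt_id (0:ℝ)).smul_const (y - x)).const_add x
  have hgd : HasDerivAt g ((fderiv ℝ f x) (y - x)) 0 := by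
    have h0 : HasFDerivAt f (fderiv ℝ f x) (x + (0:ℝ) • (y - x)) := by
      simpa using (hf x).hasFDerivAt
    exact h0.comp_hasDerivAt 0 hcurve
  have hfx : (fderiv ℝ f x) (y - x) = ⟪gradient f x, y - x⟫ := by
    have h1 : HasGradientAt f (gradient f x) x := (hf x).hasGradientAt
    rw [hasGradientAt_iff_hasFDerivAt] at h1
    rw [h1.fderiv]
    simp
  have hgc : ConvexOn ℝ Set.univ g := by
    have h2 := hc.comp_affineMap (AffineMap.lineMap x y : ℝ →ᵃ[ℝ] EuclideanSpace ℝ (Fin n))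
    have he : g = f ∘ (AffineMap.lineMap x y : ℝ →ᵃ[ℝ] EuclideanSpace ℝ (Fin n)) := by
      funext t
      simp [hgdef, AffineMap.lineMap_apply]
      rw [add_comm]
    rw [he]
    simpa using h2
  have hs := hgc.le_slope_of_hasDerivAt (Set.mem_univ (0:ℝ)) (Set.mem_univ (1:ℝ))
    one_pos hgd
  have hg0 : g 0 = f x := by simp [hgdef]
  have hg1 : g 1 = f y := by simp [hgdef]
  rw [hfx] at hs
  simpa [slope, hg0, hg1] using hs

/-- With f convex differentiable, x* a minimizer of F, H symmetric psd,
γ ∈ (0,1), η ∈ [0,1), α ∈ (0,1], if (a) Q(d) ≤ (1 − η)Q*, (b) the Armijo condition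
F(x + αd) ≤ F(x) + αγΔ holds, and (c) F(x) − F* ≥ (x − x*)ᵀH(x − x*), then
F(x + αd) − F* ≤ (1 − (1 − η)γα/2)(F(x) − F*). -/
theorem fast_linear_decrease_step {n : ℕ}
    (f : EuclideanSpace ℝ (Fin n) → ℝ) (ψ : EuclideanSpace ℝ (Fin n) → EReal)
    (H : EuclideanSpace ℝ (Fin n) →L[ℝ] EuclideanSpace ℝ (Fin n))
    (x xstar d : EuclideanSpace ℝ (Fin n)) (γ η α : ℝ)
    (hf : Differentiable ℝ f) (hfconv : ConvexOn ℝ Set.univ f)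
    (hψconv : ConvexE ψ) (hψproper : ProperPsi ψ) (hψclosed : ClosedPsi ψ)
    (hdom : ψ x ≠ ⊤)
    (hH : SymmCLM H) (hHpsd : ∀ e : EuclideanSpace ℝ (Fin n), 0 ≤ ⟪H e, e⟫)
    (hmin : ∀ y, Fm f ψ xstar ≤ Fm f ψ y)
    (hγ0 : 0 < γ) (hγ1 : γ < 1) (hη0 : 0 ≤ η) (hη1 : η < 1)
    (hα0 : 0 < α) (hα1 : α ≤ 1)
    (happrox : Qm f ψ H x d ≤ ((1 - η : ℝ) : EReal) * ⨅ e, Qm f ψ H x e)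
    (harmijo : Fm f ψ (x + α • d) ≤ Fm f ψ x + ((α * γ : ℝ) : EReal) * Dm f ψ x d)
    (hgrowth : ((⟪H (x - xstar), x - xstar⟫ : ℝ) : EReal) ≤ Fm f ψ x - Fm f ψ xstar) :
    Fm f ψ (x + α • d) - Fm f ψ xstar ≤
      ((1 - (1 - η) * γ * α / 2 : ℝ) : EReal) * (Fm f ψ x - Fm f ψ xstar) := by
  -- ψ x is finite
  set px : ℝ := (ψ x).toReal with hpxdef
  have hpx : ψ x = (px : EReal) := (EReal.coe_toReal hdom (hψproper.1 x)).symm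
  have hFx : Fm f ψ x = ((f x + px : ℝ) : EReal) := by
    rw [Fm, hpx, EReal.coe_add]
  -- ψ xstar is finite
  have hstar_ne_top : Fm f ψ xstar ≠ ⊤ := by
    intro h
    have := hmin x
    rw [h, hFx, top_le_iff] at this
    exact (EReal.coe_ne_top _) this
  have hψs_ne_top : ψ xstar ≠ ⊤ := by
    intro h
    apply hstar_ne_top
    rw [Fm, h]
    simp
  set pxs : ℝ := (ψ xstar).toReal with hpxsdef
  have hpxs : ψ xstar = (pxs : EReal) := (EReal.coe_toReal hψs_ne_top (hψproper.1 xstar)).symm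
  have hFxs : Fm f ψ xstar = ((f xstar + pxs : ℝ) : EReal) := by
    rw [Fm, hpxs, EReal.coe_add]
  -- ΔF ≥ 0
  set ΔF : ℝ := (f x + px) - (f xstar + pxs) with hΔFdef
  have hΔF0 : 0 ≤ ΔF := by
    have := hmin x
    rw [hFx, hFxs, EReal.coe_le_coe_iff] at this
    simp only [hΔFdef]
    linarith
  -- growth condition in reals
  have hgR : ⟪H (x - xstar), x - xstar⟫ ≤ ΔF := by
    have := hgrowth
    rw [hFx, hFxs, ← EReal.coe_sub, EReal.coe_le_coe_iff] at this
    exact this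
  -- Q at the direction e = xstar - x
  have hadd : x + (xstar - x) = xstar := by abel
  have hQe : Qm f ψ H x (xstar - x) =
      ((⟪gradient f x, xstar - x⟫ + 1 / 2 * ⟪H (xstar - x), xstar - x⟫ + pxs - px : ℝ) :
        EReal) := by
    rw [Qm, hadd, hpxs, hpx, ← EReal.coe_add, ← EReal.coe_sub]
  have hHsym : ⟪H (xstar - x), xstar - x⟫ = ⟪H (x - xstar), x - xstar⟫ := by
    rw [show xstar - x = -(x - xstar) by abel, map_neg, inner_neg_neg]
  have hgi : ⟪gradient f x, xstar - x⟫ ≤ f xstar - f x :=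
    grad_convex_ineq f hf hfconv x xstar
  have hQeR : Qm f ψ H x (xstar - x) ≤ ((-(1 / 2) * ΔF : ℝ) : EReal) := by
    rw [hQe, EReal.coe_le_coe_iff]
    rw [hHsym] at *
    simp only [hΔFdef]
    nlinarith [hgR, hgi]
  -- infimum bound
  have hinf : (⨅ e, Qm f ψ H x e) ≤ Qm f ψ H x (xstar - x) := iInf_le _ _
  have hcoe1η : (0 : EReal) ≤ ((1 - η : ℝ) : EReal) := by
    exact_mod_cast sub_nonneg.2 hη1.le
  have hQd : Qm f ψ H x d ≤ (((1 - η) * (-(1 / 2) * ΔF) : ℝ) : EReal) := by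
    calc Qm f ψ H x d ≤ ((1 - η : ℝ) : EReal) * ⨅ e, Qm f ψ H x e := happrox
      _ ≤ ((1 - η : ℝ) : EReal) * ((-(1 / 2) * ΔF : ℝ) : EReal) :=
          mul_le_mul_of_nonneg_left (hinf.trans hQeR) hcoe1η
      _ = (((1 - η) * (-(1 / 2) * ΔF) : ℝ) : EReal) := by rw [← EReal.coe_mul]
  -- Δ ≤ Q(d)
  have hDQ : Dm f ψ x d ≤ Qm f ψ H x d := by
    rw [Dm, Qm]
    refine EReal.sub_le_sub (add_le_add_left ?_ _) le_rfl
    rw [EReal.coe_le_coe_iff]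
    nlinarith [hHpsd d]
  have hD : Dm f ψ x d ≤ (((1 - η) * (-(1 / 2) * ΔF) : ℝ) : EReal) := hDQ.trans hQd
  -- Armijo in reals
  have hcoeαγ : (0 : EReal) ≤ ((α * γ : ℝ) : EReal) := by
    exact_mod_cast (mul_pos hα0 hγ0).le
  have harm2 : Fm f ψ (x + α • d) ≤
      (((f x + px) + (α * γ) * ((1 - η) * (-(1 / 2) * ΔF)) : ℝ) : EReal) := by
    calc Fm f ψ (x + α • d) ≤ Fm f ψ x + ((α * γ : ℝ) : EReal) * Dm f ψ x d := harmijo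
      _ ≤ ((f x + px : ℝ) : EReal) +
          ((α * γ : ℝ) : EReal) * (((1 - η) * (-(1 / 2) * ΔF) : ℝ) : EReal) := by
          rw [hFx]
          exact add_le_add_right (mul_le_mul_of_nonneg_left hD hcoeαγ) _
      _ = _ := by rw [← EReal.coe_mul, ← EReal.coe_add]
  -- F(x + αd) is finite
  have hne_top : Fm f ψ (x + α • d) ≠ ⊤ :=
    (harm2.trans_lt (EReal.coe_lt_top _)).ne
  have hne_bot : Fm f ψ (x + α • d) ≠ ⊥ := by
    rw [Fm]
    simp [EReal.add_eq_bot_iff, hψproper.1 (x + α • d)]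
  set v : ℝ := (Fm f ψ (x + α • d)).toReal with hvdef
  have hv : Fm f ψ (x + α • d) = (v : EReal) := (EReal.coe_toReal hne_top hne_bot).symm
  have hvle : v ≤ (f x + px) + (α * γ) * ((1 - η) * (-(1 / 2) * ΔF)) := by
    rw [hv, EReal.coe_le_coe_iff] at harm2
    exact harm2
  -- conclude
  rw [hv, hFx, hFxs, ← EReal.coe_sub, ← EReal.coe_sub, ← EReal.coe_mul,
    EReal.coe_le_coe_iff]
  have hring : (1 - (1 - η) * γ * α / 2) * ((f x + px) - (f xstar + pxs)) =
      ΔF + (α * γ) * ((1 - η) * (-(1 / 2) * ΔF)) := by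
    simp only [hΔFdef]; ring
  rw [hring]
  simp only [hΔFdef] at *
  linarith
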